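/- Let ℛ^{⊥_D} = {x ∈ ℝ^I : xᵀDr = 0 for all r ∈ ℛ}, let 𝒞'' = 𝒯 ∩ ℛ^{⊥_D}, and set S = D(I_I − P^D_ℛ). Then the columns of P^D_{ℛ^{⊥_D}}E form a basis of 𝒞'', the projections decompose as P^D_𝒯 = P^D_ℛ + P^D_{𝒞''}, the K×K matrix EᵀSE is invertible, and D P^D_{𝒞''} = SE(EᵀSE)⁻¹EᵀS. -/

import Mathlib

open Matrix BigOperators

noncomputable section

/-- Cells `(j,k)` of a `(J+1) × (K+1)` contingency table. -/
abbrev Cell (J K : ℕ) := Fin (J + 1) × Fin (K + 1)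

/-- Standard unit vector `e_{jk}` in `ℝ^I`. -/
def eV {J K : ℕ} (c : Cell J K) : Cell J K → ℝ := Pi.single c 1

/-- Row-sum vector `e_{j+} = Σ_k e_{jk}`. -/
def eRow {J K : ℕ} (j : Fin (J + 1)) : Cell J K → ℝ := ∑ k : Fin (K + 1), eV (j, k)

/-- Column-sum vector `e_{+k} = Σ_j e_{jk}`. -/
def eCol {J K : ℕ} (k : Fin (K + 1)) : Cell J K → ℝ := ∑ j : Fin (J + 1), eV (j, k)

/-- The all-ones vector `e_{++}`. -/
def eAll (J K : ℕ) : Cell J K → ℝ := ∑ j : Fin (J + 1), ∑ k : Fin (K + 1), eV (j, k)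

/-- The row space `ℛ = span{e_{0+},…,e_{J+}}`. -/
def rowSpace (J K : ℕ) : Submodule ℝ (Cell J K → ℝ) :=
  Submodule.span ℝ (Set.range (eRow (J := J) (K := K)))

/-- The column space `𝒞 = span{e_{+0},…,e_{+K}}`. -/
def colSpace (J K : ℕ) : Submodule ℝ (Cell J K → ℝ) :=
  Submodule.span ℝ (Set.range (eCol (J := J) (K := K)))

/-- The diagonal space `𝒟 = span{e_{++}}`. -/
def diagSpace (J K : ℕ) : Submodule ℝ (Cell J K → ℝ) :=
  Submodule.span ℝ {eAll J K}

/-- The marginal space `𝒯 = ℛ + 𝒞`. -/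
def margSpace (J K : ℕ) : Submodule ℝ (Cell J K → ℝ) := rowSpace J K ⊔ colSpace J K

/-- `P` is the `D`-orthogonal projection matrix onto the subspace `S`:
`P x ∈ S` and `x - P x` is `D`-orthogonal to `S`, for every `x`. -/
def IsProjD {J K : ℕ} (D : Matrix (Cell J K) (Cell J K) ℝ) (S : Submodule ℝ (Cell J K → ℝ))
    (P : Matrix (Cell J K) (Cell J K) ℝ) : Prop :=
  ∀ x, P.mulVec x ∈ S ∧ ∀ s ∈ S, (x - P.mulVec x) ⬝ᵥ D.mulVec s = 0

/-- The `D`-orthogonal complement of a subspace `S`. -/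
def perpD {J K : ℕ} (D : Matrix (Cell J K) (Cell J K) ℝ) (S : Submodule ℝ (Cell J K → ℝ)) :
    Submodule ℝ (Cell J K → ℝ) where
  carrier := {x | ∀ t ∈ S, x ⬝ᵥ D.mulVec t = 0}
  add_mem' := by
    intro a b ha hb t ht
    simp only [Set.mem_setOf_eq] at *
    simp [add_dotProduct, ha t ht, hb t ht]
  zero_mem' := by
    intro t ht
    simp
  smul_mem' := by
    intro c a ha t ht
    simp only [Set.mem_setOf_eq] at *
    simp [smul_dotProduct, ha t ht]

/-- The vector `c_{jk} = e_{jk} + e_{00} - e_{j0} - e_{0k}` (for `1 ≤ j`, `1 ≤ k`). -/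
def cVec {J K : ℕ} (j : Fin J) (k : Fin K) : Cell J K → ℝ :=
  eV (j.succ, k.succ) + eV (0, 0) - eV (j.succ, 0) - eV (0, k.succ)

/-- The `I × (JK)` matrix `C` with columns `c_{jk}`. -/
def Cmat (J K : ℕ) : Matrix (Cell J K) (Fin J × Fin K) ℝ :=
  fun i jk => cVec jk.1 jk.2 i

/-- The vector `b_k = e_{0k} - e_{00}` (for `1 ≤ k`). -/
def bVec {J K : ℕ} (k : Fin K) : Cell J K → ℝ :=
  eV ((0 : Fin (J + 1)), k.succ) - eV (0, 0)

/-- The `I × K` matrix `B` with columns `b_k`. -/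
def Bmat (J K : ℕ) : Matrix (Cell J K) (Fin K) ℝ :=
  fun i k => bVec k i

/-- The `I × K` matrix `E` with columns `e_{+1},…,e_{+K}`. -/
def Emat (J K : ℕ) : Matrix (Cell J K) (Fin K) ℝ :=
  fun i k => eCol k.succ i

/-- Column space of a matrix. -/
def colSpan {m n : Type*} [Fintype n] (A : Matrix m n ℝ) : Submodule ℝ (m → ℝ) :=
  Submodule.span ℝ (Set.range fun j => fun i => A i j)

/-- The reduced `(JK) × L` covariate matrix `Z°` with rows `z_{jk}ᵀ`, `j,k ≥ 1`. -/
def Zred {J K : ℕ} {L : Type*} (Z : Matrix (Cell J K) L ℝ) : Matrix (Fin J × Fin K) L ℝ :=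
  fun jk => Z (jk.1.succ, jk.2.succ)

/-- The model space `ℋ = 𝒯 + col(Z)` of the log-linear model
`η_{jk} = α + ρ_j + γ_k + z_{jk}ᵀ θ`. -/
def modelSpace {J K : ℕ} {L : Type*} [Fintype L] (Z : Matrix (Cell J K) L ℝ) :
    Submodule ℝ (Cell J K → ℝ) :=
  margSpace J K ⊔ colSpan Z

end
noncomputable section Aux
open Matrix
variable {J K : ℕ} {μ : Cell J K → ℝ}

lemma form_symm (x y : Cell J K → ℝ) :
    x ⬝ᵥ (Matrix.diagonal μ).mulVec y = y ⬝ᵥ (Matrix.diagonal μ).mulVec x := by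
  simp only [dotProduct, Matrix.mulVec_diagonal]
  exact Finset.sum_congr rfl fun i _ => by ring

lemma form_posdef (hμ : ∀ i, 0 < μ i) {x : Cell J K → ℝ}
    (h : x ⬝ᵥ (Matrix.diagonal μ).mulVec x = 0) : x = 0 := by
  simp only [dotProduct, Matrix.mulVec_diagonal] at h
  have hnn : ∀ i ∈ Finset.univ, (0:ℝ) ≤ x i * (μ i * x i) := by
    intro i _; nlinarith [hμ i, sq_nonneg (x i)]
  have := (Finset.sum_eq_zero_iff_of_nonneg hnn).1 h
  funext i
  have hi := this i (Finset.mem_univ i)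
  have h2 : μ i * x i ^ 2 = 0 := by linear_combination hi
  have h3 : x i ^ 2 = 0 := (mul_eq_zero.1 h2).resolve_left (hμ i).ne'
  show x i = 0
  exact sq_eq_zero_iff.1 h3

lemma matrix_ext_mulVec {M N : Matrix (Cell J K) (Cell J K) ℝ}
    (h : ∀ v, M.mulVec v = N.mulVec v) : M = N := by
  ext i j
  have := congrFun (h (Pi.single j 1)) i
  simpa [Matrix.mulVec_single] using this

lemma ext_of_forms {M N : Matrix (Cell J K) (Cell J K) ℝ}
    (h : ∀ x y, x ⬝ᵥ M.mulVec y = x ⬝ᵥ N.mulVec y) : M = N := by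
  ext i j
  have := h (Pi.single i 1) (Pi.single j 1)
  simpa [Matrix.mulVec_single, single_dotProduct] using this

lemma proj_unique (hμ : ∀ i, 0 < μ i) {W : Submodule ℝ (Cell J K → ℝ)}
    {P Q : Matrix (Cell J K) (Cell J K) ℝ}
    (hP : IsProjD (Matrix.diagonal μ) W P) (hQ : IsProjD (Matrix.diagonal μ) W Q) : P = Q := by
  apply matrix_ext_mulVec
  intro x
  have hd : P.mulVec x - Q.mulVec x ∈ W := W.sub_mem (hP x).1 (hQ x).1
  have h1 := (hP x).2 _ hd
  have h2 := (hQ x).2 _ hd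
  have key : (P.mulVec x - Q.mulVec x) ⬝ᵥ (Matrix.diagonal μ).mulVec (P.mulVec x - Q.mulVec x) = 0 := by
    have : P.mulVec x - Q.mulVec x = (x - Q.mulVec x) - (x - P.mulVec x) := by abel
    have e := congrArg (fun z => z ⬝ᵥ (Matrix.diagonal μ).mulVec (P.mulVec x - Q.mulVec x)) this
    rw [e, sub_dotProduct, h1, h2, sub_zero]
  have := form_posdef hμ key
  exact (sub_eq_zero.1 this)

section Generic
variable {n : Type*} [Fintype n] [DecidableEq n]

lemma mem_colSpan_iff (X : Matrix (Cell J K) n ℝ) (y : Cell J K → ℝ) :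
    y ∈ colSpan X ↔ ∃ a, X.mulVec a = y := by
  rw [colSpan, Submodule.mem_span_range_iff_exists_fun]
  constructor
  · rintro ⟨a, rfl⟩
    exact ⟨a, by funext i; simp [Matrix.mulVec, dotProduct, Finset.sum_apply, mul_comm]⟩
  · rintro ⟨a, rfl⟩
    exact ⟨a, by funext i; simp [Matrix.mulVec, dotProduct, Finset.sum_apply, mul_comm]⟩

lemma gram_isUnit (hμ : ∀ i, 0 < μ i) (X : Matrix (Cell J K) n ℝ)
    (hX : LinearIndependent ℝ (fun j => fun i => X i j)) :
    IsUnit (Xᵀ * Matrix.diagonal μ * X) := by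
  rw [← Matrix.mulVec_injective_iff_isUnit]
  have hker : ∀ a, (Xᵀ * Matrix.diagonal μ * X).mulVec a = 0 → a = 0 := by
    intro a ha
    have h0 : a ⬝ᵥ (Xᵀ * Matrix.diagonal μ * X).mulVec a = 0 := by rw [ha]; simp
    have hform : a ⬝ᵥ (Xᵀ * Matrix.diagonal μ * X).mulVec a
        = (X.mulVec a) ⬝ᵥ (Matrix.diagonal μ).mulVec (X.mulVec a) := by
      rw [← Matrix.mulVec_mulVec, ← Matrix.mulVec_mulVec, Matrix.dotProduct_mulVec,
        Matrix.vecMul_transpose]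
    have hXa : X.mulVec a = 0 := form_posdef hμ (by rw [← hform, h0])
    have := Fintype.linearIndependent_iff.1 hX a ?_
    · funext j; exact this j
    · funext i
      have := congrFun hXa i
      simpa [Matrix.mulVec, dotProduct, Finset.sum_apply, mul_comm] using this
  intro a b hab
  have : (Xᵀ * Matrix.diagonal μ * X).mulVec (a - b) = 0 := by
    rw [Matrix.mulVec_sub, hab, sub_self]
  exact sub_eq_zero.1 (hker _ this)

lemma proj_formula (hμ : ∀ i, 0 < μ i) (X : Matrix (Cell J K) n ℝ)
    (hX : LinearIndependent ℝ (fun j => fun i => X i j)) :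
    IsProjD (Matrix.diagonal μ) (colSpan X)
      (X * (Xᵀ * Matrix.diagonal μ * X)⁻¹ * Xᵀ * Matrix.diagonal μ) := by
  set D := Matrix.diagonal μ with hD
  set G := Xᵀ * D * X with hGdef
  have hG : IsUnit G := gram_isUnit hμ X hX
  have hGG : G * G⁻¹ = 1 := Matrix.mul_nonsing_inv _ ((Matrix.isUnit_iff_isUnit_det G).1 hG)
  have hXDP : Xᵀ * D * (X * G⁻¹ * Xᵀ * D) = Xᵀ * D := by
    calc Xᵀ * D * (X * G⁻¹ * Xᵀ * D) = (G * G⁻¹) * (Xᵀ * D) := by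
          simp only [hGdef, Matrix.mul_assoc]
      _ = Xᵀ * D := by rw [hGG, Matrix.one_mul]
  intro x
  constructor
  · rw [show X * G⁻¹ * Xᵀ * D = X * (G⁻¹ * Xᵀ * D) by simp only [Matrix.mul_assoc],
      ← Matrix.mulVec_mulVec]
    exact (mem_colSpan_iff X _).2 ⟨_, rfl⟩
  · intro s hs
    obtain ⟨a, rfl⟩ := (mem_colSpan_iff X s).1 hs
    have hv : (Xᵀ * D).mulVec (x - (X * G⁻¹ * Xᵀ * D).mulVec x) = 0 := by
      rw [Matrix.mulVec_sub, Matrix.mulVec_mulVec, hXDP, sub_self]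
    calc (x - (X * G⁻¹ * Xᵀ * D).mulVec x) ⬝ᵥ D.mulVec (X.mulVec a)
        = (x - (X * G⁻¹ * Xᵀ * D).mulVec x) ⬝ᵥ (D * X).mulVec a := by
          rw [Matrix.mulVec_mulVec]
      _ = ((D * X)ᵀ.mulVec (x - (X * G⁻¹ * Xᵀ * D).mulVec x)) ⬝ᵥ a := by
          rw [Matrix.mulVec_transpose, Matrix.dotProduct_mulVec]
      _ = ((Xᵀ * D).mulVec (x - (X * G⁻¹ * Xᵀ * D).mulVec x)) ⬝ᵥ a := by
          rw [Matrix.transpose_mul, Matrix.diagonal_transpose]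
      _ = 0 := by rw [hv]; simp

end Generic
end Aux
section Spaces
variable {J K : ℕ}

lemma eCol_apply (k : Fin (K+1)) (c : Cell J K) : eCol k c = if c.2 = k then 1 else 0 := by
  rcases c with ⟨j', k'⟩
  simp only [eCol, eV, Finset.sum_apply, Pi.single_apply, Prod.mk.injEq]
  by_cases h : k' = k <;> simp [h, Prod.ext_iff]

lemma eAll_eq_sum_cols : eAll J K = ∑ k : Fin (K+1), eCol k := by
  rw [eAll, Finset.sum_comm]; rfl

lemma eAll_mem_rowSpace : eAll J K ∈ rowSpace J K := by
  rw [show eAll J K = ∑ j : Fin (J+1), eRow j from rfl]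
  exact Submodule.sum_mem _ fun j _ => Submodule.subset_span ⟨j, rfl⟩

lemma rowSpace_const {r : Cell J K → ℝ} (hr : r ∈ rowSpace J K) (j : Fin (J+1))
    (k k' : Fin (K+1)) : r (j, k) = r (j, k') := by
  induction hr using Submodule.span_induction with
  | mem x hx =>
      obtain ⟨j0, rfl⟩ := hx
      simp only [eRow, Finset.sum_apply, eV, Pi.single_apply]
      by_cases h : j = j0 <;> simp [Prod.ext_iff, h]
  | zero => simp
  | add x y _ _ hx hy => simp [hx, hy]
  | smul a x _ hx => simp [hx]

end Spaces


theorem projection_decomposition_marginal_space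
    {J K : ℕ} (hJ : 1 ≤ J) (hK : 1 ≤ K)
    (μ : Cell J K → ℝ) (hμ : ∀ i, 0 < μ i)
    (PR : Matrix (Cell J K) (Cell J K) ℝ)
    (hPR : IsProjD (Matrix.diagonal μ) (rowSpace J K) PR)
    (PRperp : Matrix (Cell J K) (Cell J K) ℝ)
    (hPRperp : IsProjD (Matrix.diagonal μ) (perpD (Matrix.diagonal μ) (rowSpace J K)) PRperp)
    (PT : Matrix (Cell J K) (Cell J K) ℝ)
    (hPT : IsProjD (Matrix.diagonal μ) (margSpace J K) PT)
    (PC'' : Matrix (Cell J K) (Cell J K) ℝ)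
    (hPC'' : IsProjD (Matrix.diagonal μ)
      (margSpace J K ⊓ perpD (Matrix.diagonal μ) (rowSpace J K)) PC'')
    (S : Matrix (Cell J K) (Cell J K) ℝ)
    (hS : S = Matrix.diagonal μ * (1 - PR)) :
    LinearIndependent ℝ (fun k : Fin K => fun i => (PRperp * Emat J K) i k) ∧
    Submodule.span ℝ (Set.range fun k : Fin K => fun i => (PRperp * Emat J K) i k) =
      margSpace J K ⊓ perpD (Matrix.diagonal μ) (rowSpace J K) ∧
    PT = PR + PC'' ∧
    IsUnit ((Emat J K)ᵀ * S * Emat J K) ∧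
    Matrix.diagonal μ * PC'' =
      S * Emat J K * ((Emat J K)ᵀ * S * Emat J K)⁻¹ * (Emat J K)ᵀ * S := by
  have hPRfix : ∀ r ∈ rowSpace J K, PR *ᵥ r = r := by
    intro r hr
    have hd : r - PR *ᵥ r ∈ rowSpace J K := Submodule.sub_mem _ hr (hPR r).1
    exact (sub_eq_zero.1 (form_posdef hμ ((hPR r).2 _ hd))).symm
  have hperp_mem : ∀ x, x - PR *ᵥ x ∈ perpD (Matrix.diagonal μ) (rowSpace J K) := by
    intro x t ht
    exact (hPR x).2 t ht
  have hPerpProj : IsProjD (Matrix.diagonal μ) (perpD (Matrix.diagonal μ) (rowSpace J K))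
      (1 - PR) := by
    intro x
    constructor
    · rw [Matrix.sub_mulVec, Matrix.one_mulVec]
      exact hperp_mem x
    · intro s hs
      have hx : x - (1 - PR) *ᵥ x = PR *ᵥ x := by
        rw [Matrix.sub_mulVec, Matrix.one_mulVec]; abel
      rw [hx, form_symm]
      exact hs _ (hPR x).1
  have hPerpEq : PRperp = 1 - PR := proj_unique hμ hPRperp hPerpProj
  subst hPerpEq
  subst hS
  set D := Matrix.diagonal μ with hD
  set F := (1 - PR) * Emat J K with hF
  have hcolF : ∀ k : Fin K, (fun i => F i k) = (1 - PR) *ᵥ eCol k.succ := by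
    intro k; funext i
    simp [hF, Matrix.mul_apply, Matrix.mulVec, dotProduct, Emat]
  -- membership of columns
  have hFmem : ∀ k : Fin K,
      (1 - PR) *ᵥ eCol k.succ ∈ margSpace J K ⊓ perpD D (rowSpace J K) := by
    intro k
    refine Submodule.mem_inf.2 ⟨?_, ?_⟩
    · rw [Matrix.sub_mulVec, Matrix.one_mulVec]
      refine Submodule.sub_mem _ ?_ ?_
      · exact Submodule.mem_sup_right (Submodule.subset_span ⟨k.succ, rfl⟩)
      · exact Submodule.mem_sup_left (hPR _).1
    · rw [Matrix.sub_mulVec, Matrix.one_mulVec]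
      exact hperp_mem _
  -- linear independence
  have hFli : LinearIndependent ℝ (fun k : Fin K => fun i => F i k) := by
    rw [Fintype.linearIndependent_iff]
    intro g hg k
    set v : Cell J K → ℝ := ∑ k : Fin K, g k • eCol k.succ with hv
    have hsum : (1 - PR) *ᵥ v = 0 := by
      have e1 : (1 - PR) *ᵥ v = ∑ k : Fin K, g k • ((1 - PR) *ᵥ eCol k.succ) := by
        rw [hv, ← Matrix.mulVecLin_apply, map_sum]
        simp only [Matrix.mulVecLin_apply, Matrix.mulVec_smul]
      rw [e1, ← hg]
      exact (Finset.sum_congr rfl fun k _ => by rw [hcolF]).symm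
    have hvrow : v ∈ rowSpace J K := by
      rw [Matrix.sub_mulVec, Matrix.one_mulVec] at hsum
      rw [sub_eq_zero.1 hsum]
      exact (hPR v).1
    have hconst := rowSpace_const hvrow 0 (0 : Fin (K+1)) k.succ
    have h00 : v (0, 0) = 0 := by
      rw [hv]
      simp [Finset.sum_apply, eCol_apply, (Fin.succ_ne_zero _).symm]
    have hks : v (0, k.succ) = g k := by
      rw [hv]
      simp [Finset.sum_apply, eCol_apply, Fin.succ_inj]
    rw [h00, hks] at hconst
    exact hconst.symm
  -- span equality
  have hspan : Submodule.span ℝ (Set.range fun k : Fin K => fun i => F i k)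
      = margSpace J K ⊓ perpD D (rowSpace J K) := by
    apply le_antisymm
    · rw [Submodule.span_le]
      rintro y ⟨k, rfl⟩
      have h := hFmem k
      rw [← hcolF k] at h
      exact h
    · intro v hv
      have hvT := (Submodule.mem_inf.1 hv).1
      have hvP := (Submodule.mem_inf.1 hv).2
      have hPRv : PR *ᵥ v = 0 := by
        have h1 := (hPR v).2 _ (hPR v).1
        have h2 := hvP _ (hPR v).1
        have e := congrArg (fun z => z ⬝ᵥ D *ᵥ (PR *ᵥ v))
          (show PR *ᵥ v = v - (v - PR *ᵥ v) by abel)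
        refine form_posdef hμ ?_
        rw [e, sub_dotProduct, h2, h1, sub_zero]
      have hveq : v = (1 - PR) *ᵥ v := by
        rw [Matrix.sub_mulVec, Matrix.one_mulVec, hPRv, sub_zero]
      obtain ⟨r, hr, c, hc, rfl⟩ := Submodule.mem_sup.1 hvT
      obtain ⟨a, rfl⟩ := (Submodule.mem_span_range_iff_exists_fun ℝ).1 hc
      have hrz : (1 - PR) *ᵥ r = 0 := by
        rw [Matrix.sub_mulVec, Matrix.one_mulVec, hPRfix r hr, sub_self]
      have expand : (1 - PR) *ᵥ (∑ k0 : Fin (K+1), a k0 • eCol k0)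
          = ∑ k0 : Fin (K+1), a k0 • ((1 - PR) *ᵥ eCol k0) := by
        rw [← Matrix.mulVecLin_apply, map_sum]
        simp only [Matrix.mulVecLin_apply, Matrix.mulVec_smul]
      rw [hveq, Matrix.mulVec_add, hrz, zero_add, expand]
      refine Submodule.sum_mem _ fun k0 _ => Submodule.smul_mem _ _ ?_
      induction k0 using Fin.cases with
      | zero =>
          have hc0 : eCol (0 : Fin (K+1)) = eAll J K - ∑ k : Fin K, eCol k.succ := by
            rw [eAll_eq_sum_cols, Fin.sum_univ_succ]; abel
          have hAll : (1 - PR) *ᵥ eAll J K = 0 := by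
            rw [Matrix.sub_mulVec, Matrix.one_mulVec, hPRfix _ eAll_mem_rowSpace, sub_self]
          have expand2 : (1 - PR) *ᵥ (∑ k : Fin K, eCol (J := J) k.succ)
              = ∑ k : Fin K, (1 - PR) *ᵥ eCol k.succ := by
            rw [← Matrix.mulVecLin_apply, map_sum]
            simp only [Matrix.mulVecLin_apply]
          rw [hc0, Matrix.mulVec_sub, hAll, zero_sub, expand2]
          refine Submodule.neg_mem _ (Submodule.sum_mem _ fun k _ => ?_)
          exact Submodule.subset_span ⟨k, (hcolF k).symm⟩
      | succ k =>
          exact Submodule.subset_span ⟨k, (hcolF k).symm⟩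
  -- PT = PR + PC''
  have hTsum : IsProjD D (margSpace J K) (PR + PC'') := by
    intro x
    have hmemC := Submodule.mem_inf.1 (hPC'' x).1
    constructor
    · rw [Matrix.add_mulVec]
      exact Submodule.add_mem _ (Submodule.mem_sup_left (hPR x).1) hmemC.1
    · intro s hs
      have hrS : PR *ᵥ s ∈ rowSpace J K := (hPR s).1
      have hcs : s - PR *ᵥ s ∈ margSpace J K ⊓ perpD D (rowSpace J K) :=
        Submodule.mem_inf.2
          ⟨Submodule.sub_mem _ hs (Submodule.mem_sup_left hrS), hperp_mem s⟩
      have e := congrArg (fun t => (x - (PR + PC'') *ᵥ x) ⬝ᵥ D *ᵥ t)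
        (show s = PR *ᵥ s + (s - PR *ᵥ s) by abel)
      have hx1 : x - (PR + PC'') *ᵥ x = (x - PR *ᵥ x) - PC'' *ᵥ x := by
        rw [Matrix.add_mulVec]; abel
      have hx2 : x - (PR + PC'') *ᵥ x = (x - PC'' *ᵥ x) - PR *ᵥ x := by
        rw [Matrix.add_mulVec]; abel
      have t1 : (x - (PR + PC'') *ᵥ x) ⬝ᵥ D *ᵥ (PR *ᵥ s) = 0 := by
        rw [hx1, sub_dotProduct, (hPR x).2 _ hrS, hmemC.2 _ hrS, sub_zero]
      have t2 : (x - (PR + PC'') *ᵥ x) ⬝ᵥ D *ᵥ (s - PR *ᵥ s) = 0 := by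
        rw [hx2, sub_dotProduct, (hPC'' x).2 _ hcs]
        rw [form_symm, hperp_mem s _ (hPR x).1]
        simp
      rw [e, Matrix.mulVec_add, dotProduct_add, t1, t2, add_zero]
  have hPTeq : PT = PR + PC'' := proj_unique hμ hPT hTsum
  -- self-adjointness and idempotency
  have hkey2 : (1 - PR)ᵀ * D = D * (1 - PR) := by
    apply ext_of_forms
    intro x y
    have lhs_eq : x ⬝ᵥ ((1 - PR)ᵀ * D) *ᵥ y = ((1 - PR) *ᵥ x) ⬝ᵥ D *ᵥ y := by
      rw [← Matrix.mulVec_mulVec, Matrix.dotProduct_mulVec, Matrix.vecMul_transpose]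
    have hxp : x - (1 - PR) *ᵥ x = PR *ᵥ x := by
      rw [Matrix.sub_mulVec, Matrix.one_mulVec]; abel
    have hyp : y - (1 - PR) *ᵥ y = PR *ᵥ y := by
      rw [Matrix.sub_mulVec, Matrix.one_mulVec]; abel
    have hL : ((1 - PR) *ᵥ x) ⬝ᵥ D *ᵥ y
        - ((1 - PR) *ᵥ x) ⬝ᵥ D *ᵥ ((1 - PR) *ᵥ y) = 0 := by
      rw [← dotProduct_sub, ← Matrix.mulVec_sub, hyp]
      have : (1 - PR) *ᵥ x = x - PR *ᵥ x := by
        rw [Matrix.sub_mulVec, Matrix.one_mulVec]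
      rw [this]
      exact hperp_mem x _ (hPR y).1
    have hR : x ⬝ᵥ D *ᵥ ((1 - PR) *ᵥ y)
        - ((1 - PR) *ᵥ x) ⬝ᵥ D *ᵥ ((1 - PR) *ᵥ y) = 0 := by
      rw [← sub_dotProduct, hxp, form_symm]
      have : (1 - PR) *ᵥ y = y - PR *ᵥ y := by
        rw [Matrix.sub_mulVec, Matrix.one_mulVec]
      rw [this]
      exact hperp_mem y _ (hPR x).1
    rw [lhs_eq, ← Matrix.mulVec_mulVec]
    linarith
  have hPRidem : PR * PR = PR := by
    apply matrix_ext_mulVec; intro v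
    rw [← Matrix.mulVec_mulVec]
    exact hPRfix _ (hPR v).1
  have hIdem : (1 - PR) * (1 - PR) = 1 - PR := by
    rw [Matrix.mul_sub, Matrix.mul_one, Matrix.sub_mul, Matrix.one_mul, hPRidem, sub_self,
      sub_zero]
  have hkey2' : ∀ M : Matrix (Cell J K) (Fin K) ℝ,
      (1 - PR)ᵀ * (D * M) = D * ((1 - PR) * M) := by
    intro M; rw [← Matrix.mul_assoc, hkey2, Matrix.mul_assoc]
  have hIdem' : ∀ M : Matrix (Cell J K) (Fin K) ℝ,
      (1 - PR) * ((1 - PR) * M) = (1 - PR) * M := by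
    intro M; rw [← Matrix.mul_assoc, hIdem]
  have hGram : Fᵀ * D * F = (Emat J K)ᵀ * (D * (1 - PR)) * Emat J K := by
    simp only [hF, Matrix.transpose_mul, Matrix.mul_assoc, hkey2', hIdem']
  -- projection formula
  have hprojF := proj_formula hμ F hFli
  have hcolSpanF : colSpan F = margSpace J K ⊓ perpD D (rowSpace J K) := hspan
  rw [hcolSpanF] at hprojF
  have hPCeq : PC'' = F * (Fᵀ * D * F)⁻¹ * Fᵀ * D := proj_unique hμ hPC'' hprojF
  refine ⟨hFli, hspan, hPTeq, ?_, ?_⟩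
  · rw [← hGram]
    exact gram_isUnit hμ F hFli
  · rw [hPCeq, ← hGram]
    simp only [hF, Matrix.transpose_mul, Matrix.mul_assoc, hkey2', hkey2, hIdem', hIdem]
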